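/- Let P₁, P₂, Q be orthogonal projections on a complex Hilbert space H such that P₁ commutes with Q and P₂ commutes with Q. Then (P₁ ⇒ P₂) ∧ Q = [ (P₁ ∧ Q) ⇒ (P₂ ∧ Q) ] ∧ Q, where P ⇒ R denotes the Sasaki arrow P^⊥ ∨ (P ∧ R). -/

import Mathlib

variable {H : Type} [NormedAddCommGroup H] [InnerProductSpace ℂ H] [CompleteSpace H]

/-- `P` is an orthogonal projection on `H`: self-adjoint and idempotent. -/
def IsOrthProj (P : H →L[ℂ] H) : Prop := IsSelfAdjoint P ∧ P * P = P

lemma isOrthProj_mem_range_iff {P : H →L[ℂ] H} (h : IsOrthProj P) {x : H} :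
    x ∈ LinearMap.range (P : H →ₗ[ℂ] H) ↔ P x = x := by
  constructor
  · rintro ⟨y, rfl⟩
    have := congrArg (fun T : H →L[ℂ] H => T y) h.2
    simpa using this
  · intro hx; exact ⟨x, hx⟩

lemma isOrthProj_mem_orth_iff {P : H →L[ℂ] H} (h : IsOrthProj P) {x : H} :
    x ∈ (LinearMap.range (P : H →ₗ[ℂ] H))ᗮ ↔ P x = 0 := by
  have hadj : ContinuousLinearMap.adjoint P = P :=
    ContinuousLinearMap.isSelfAdjoint_iff'.mp h.1
  have hswap : ∀ y z : H, (inner ℂ (P y) z : ℂ) = inner ℂ y (P z) := by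
    intro y z
    conv_lhs => rw [← hadj]
    rw [ContinuousLinearMap.adjoint_inner_left]
  have hPP : ∀ y : H, P (P y) = P y := by
    intro y
    have := congrArg (fun T : H →L[ℂ] H => T y) h.2
    simpa using this
  constructor
  · intro hx
    have h1 : (inner ℂ (P x) x : ℂ) = 0 := hx (P x) ⟨x, rfl⟩
    have h2 : (inner ℂ (P x) (P x) : ℂ) = 0 := by
      rw [hswap, hPP, ← hswap, h1]
    exact inner_self_eq_zero.mp h2
  · intro hx u hu
    obtain ⟨y, rfl⟩ := hu
    rw [ContinuousLinearMap.coe_coe, hswap, hx, inner_zero_right]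

lemma isOrthProj_sup_orth {P : H →L[ℂ] H} (h : IsOrthProj P) {K : Submodule ℂ H}
    (hK : K ≤ LinearMap.range (P : H →ₗ[ℂ] H)) :
    (LinearMap.range (P : H →ₗ[ℂ] H))ᗮ ⊔ K = K.comap (P : H →ₗ[ℂ] H) := by
  apply le_antisymm
  · apply sup_le
    · intro x hx
      have : P x = 0 := (isOrthProj_mem_orth_iff h).mp hx
      simp [Submodule.mem_comap, this]
    · intro x hx
      have : P x = x := (isOrthProj_mem_range_iff h).mp (hK hx)
      simp [Submodule.mem_comap, this, hx]
  · intro x hx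
    simp only [Submodule.mem_comap, ContinuousLinearMap.coe_coe] at hx
    have hx1 : x - P x ∈ (LinearMap.range (P : H →ₗ[ℂ] H))ᗮ := by
      rw [isOrthProj_mem_orth_iff h]
      have hPP := congrArg (fun T : H →L[ℂ] H => T x) h.2
      simp only [ContinuousLinearMap.mul_apply] at hPP
      simp [map_sub, hPP]
    have : x = (x - P x) + P x := by abel
    rw [this]
    exact Submodule.add_mem _ (Submodule.mem_sup_left hx1) (Submodule.mem_sup_right hx)

lemma isOrthProj_isClosed_range {P : H →L[ℂ] H} (h : IsOrthProj P) :
    IsClosed ((LinearMap.range (P : H →ₗ[ℂ] H) : Submodule ℂ H) : Set H) := by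
  have : ((LinearMap.range (P : H →ₗ[ℂ] H) : Submodule ℂ H) : Set H) = {x | P x = x} := by
    ext x; exact isOrthProj_mem_range_iff h
  rw [this]
  exact isClosed_eq P.continuous continuous_id

theorem stmt10 (P₁ P₂ Q : H →L[ℂ] H) (h1 : IsOrthProj P₁) (h2 : IsOrthProj P₂)
    (hQ : IsOrthProj Q) (hc1 : P₁ * Q = Q * P₁) (hc2 : P₂ * Q = Q * P₂) :
    ((LinearMap.range (P₁ : H →ₗ[ℂ] H))ᗮ ⊔ (LinearMap.range (P₁ : H →ₗ[ℂ] H) ⊓ LinearMap.range (P₂ : H →ₗ[ℂ] H))).topologicalClosure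
        ⊓ LinearMap.range (Q : H →ₗ[ℂ] H)
      = ((LinearMap.range (P₁ : H →ₗ[ℂ] H) ⊓ LinearMap.range (Q : H →ₗ[ℂ] H))ᗮ ⊔
          ((LinearMap.range (P₁ : H →ₗ[ℂ] H) ⊓ LinearMap.range (Q : H →ₗ[ℂ] H)) ⊓
            (LinearMap.range (P₂ : H →ₗ[ℂ] H) ⊓ LinearMap.range (Q : H →ₗ[ℂ] H)))).topologicalClosure
        ⊓ LinearMap.range (Q : H →ₗ[ℂ] H) := by
  -- P' = P₁ * Q is an orthogonal projection with range = range P₁ ⊓ range Q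
  have hadj1 : ContinuousLinearMap.adjoint P₁ = P₁ :=
    ContinuousLinearMap.isSelfAdjoint_iff'.mp h1.1
  have hadjQ : ContinuousLinearMap.adjoint Q = Q :=
    ContinuousLinearMap.isSelfAdjoint_iff'.mp hQ.1
  have hP' : IsOrthProj (P₁ * Q) := by
    constructor
    · rw [ContinuousLinearMap.isSelfAdjoint_iff']
      have : ContinuousLinearMap.adjoint (P₁ ∘L Q) =
          ContinuousLinearMap.adjoint Q ∘L ContinuousLinearMap.adjoint P₁ :=
        ContinuousLinearMap.adjoint_comp P₁ Q
      rw [hadj1, hadjQ] at this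
      calc ContinuousLinearMap.adjoint (P₁ * Q) = Q * P₁ := this
        _ = P₁ * Q := hc1.symm
    · calc P₁ * Q * (P₁ * Q) = P₁ * (Q * P₁) * Q := by noncomm_ring
        _ = P₁ * (P₁ * Q) * Q := by rw [← hc1]
        _ = (P₁ * P₁) * (Q * Q) := by noncomm_ring
        _ = P₁ * Q := by rw [h1.2, hQ.2]
  have hrange' : LinearMap.range ((P₁ * Q : H →L[ℂ] H) : H →ₗ[ℂ] H) = LinearMap.range (P₁ : H →ₗ[ℂ] H) ⊓ LinearMap.range (Q : H →ₗ[ℂ] H) := by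
    ext x
    rw [isOrthProj_mem_range_iff hP']
    simp only [Submodule.mem_inf, isOrthProj_mem_range_iff h1, isOrthProj_mem_range_iff hQ]
    constructor
    · intro hx
      have e1 : P₁ ((P₁ * Q) x) = (P₁ * Q) x := by
        have := congrArg (fun T : H →L[ℂ] H => T x) (show P₁ * (P₁ * Q) = P₁ * Q by
          rw [← mul_assoc, h1.2])
        simpa using this
      have e2 : Q ((P₁ * Q) x) = (P₁ * Q) x := by
        have := congrArg (fun T : H →L[ℂ] H => T x) (show Q * (P₁ * Q) = P₁ * Q by
          rw [← mul_assoc, ← hc1, mul_assoc, hQ.2])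
        simpa using this
      rw [show (P₁ * Q) x = P₁ (Q x) from rfl] at e1 e2 hx
      rw [hx] at e1 e2
      exact ⟨e1, e2⟩
    · rintro ⟨hx1, hx2⟩
      show P₁ (Q x) = x
      rw [hx2, hx1]
  -- both sups are closed (comap of closed submodules), compute them
  have hKle : LinearMap.range (P₁ : H →ₗ[ℂ] H) ⊓ LinearMap.range (P₂ : H →ₗ[ℂ] H) ≤ LinearMap.range (P₁ : H →ₗ[ℂ] H) := inf_le_left
  have hsup1 := isOrthProj_sup_orth h1 hKle
  have hK'le : (LinearMap.range (P₁ : H →ₗ[ℂ] H) ⊓ LinearMap.range (Q : H →ₗ[ℂ] H)) ⊓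
      (LinearMap.range (P₂ : H →ₗ[ℂ] H) ⊓ LinearMap.range (Q : H →ₗ[ℂ] H)) ≤ LinearMap.range (P₁ : H →ₗ[ℂ] H) ⊓ LinearMap.range (Q : H →ₗ[ℂ] H) :=
    inf_le_left
  have hsup2 : (LinearMap.range (P₁ : H →ₗ[ℂ] H) ⊓ LinearMap.range (Q : H →ₗ[ℂ] H))ᗮ ⊔
      ((LinearMap.range (P₁ : H →ₗ[ℂ] H) ⊓ LinearMap.range (Q : H →ₗ[ℂ] H)) ⊓ (LinearMap.range (P₂ : H →ₗ[ℂ] H) ⊓ LinearMap.range (Q : H →ₗ[ℂ] H)))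
      = ((LinearMap.range (P₁ : H →ₗ[ℂ] H) ⊓ LinearMap.range (Q : H →ₗ[ℂ] H)) ⊓
          (LinearMap.range (P₂ : H →ₗ[ℂ] H) ⊓ LinearMap.range (Q : H →ₗ[ℂ] H))).comap ((P₁ * Q : H →L[ℂ] H) : H →ₗ[ℂ] H) := by
    rw [← hrange']
    exact isOrthProj_sup_orth hP' (hrange' ▸ hK'le)
  have hclosed1 : IsClosed (((LinearMap.range (P₁ : H →ₗ[ℂ] H) ⊓ LinearMap.range (P₂ : H →ₗ[ℂ] H)).comap
      ((P₁ : H →L[ℂ] H) : H →ₗ[ℂ] H) : Submodule ℂ H) : Set H) := by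
    have : (((LinearMap.range (P₁ : H →ₗ[ℂ] H) ⊓ LinearMap.range (P₂ : H →ₗ[ℂ] H)).comap
        ((P₁ : H →L[ℂ] H) : H →ₗ[ℂ] H) : Submodule ℂ H) : Set H)
        = P₁ ⁻¹' ((LinearMap.range (P₁ : H →ₗ[ℂ] H) ⊓ LinearMap.range (P₂ : H →ₗ[ℂ] H) : Submodule ℂ H) : Set H) := rfl
    rw [this]
    exact (((isOrthProj_isClosed_range h1).inter (isOrthProj_isClosed_range h2))).preimage
      P₁.continuous
  have hclosed2 : IsClosed ((((LinearMap.range (P₁ : H →ₗ[ℂ] H) ⊓ LinearMap.range (Q : H →ₗ[ℂ] H)) ⊓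
      (LinearMap.range (P₂ : H →ₗ[ℂ] H) ⊓ LinearMap.range (Q : H →ₗ[ℂ] H))).comap
      ((P₁ * Q : H →L[ℂ] H) : H →ₗ[ℂ] H) : Submodule ℂ H) : Set H) := by
    have : ((((LinearMap.range (P₁ : H →ₗ[ℂ] H) ⊓ LinearMap.range (Q : H →ₗ[ℂ] H)) ⊓
        (LinearMap.range (P₂ : H →ₗ[ℂ] H) ⊓ LinearMap.range (Q : H →ₗ[ℂ] H))).comap
        ((P₁ * Q : H →L[ℂ] H) : H →ₗ[ℂ] H) : Submodule ℂ H) : Set H)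
        = (P₁ * Q) ⁻¹' (((LinearMap.range (P₁ : H →ₗ[ℂ] H) ⊓ LinearMap.range (Q : H →ₗ[ℂ] H)) ⊓
          (LinearMap.range (P₂ : H →ₗ[ℂ] H) ⊓ LinearMap.range (Q : H →ₗ[ℂ] H)) : Submodule ℂ H) : Set H) := rfl
    rw [this]
    exact (((isOrthProj_isClosed_range h1).inter (isOrthProj_isClosed_range hQ)).inter
      ((isOrthProj_isClosed_range h2).inter (isOrthProj_isClosed_range hQ))).preimage
      (P₁ * Q).continuous
  rw [hsup1, hsup2, IsClosed.submodule_topologicalClosure_eq hclosed1,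
    IsClosed.submodule_topologicalClosure_eq hclosed2]
  -- now an elementwise computation
  ext x
  simp only [Submodule.mem_inf, Submodule.mem_comap, ContinuousLinearMap.coe_coe,
    Submodule.mem_inf]
  constructor
  · rintro ⟨⟨ha, hb⟩, hxQ⟩
    have hQx : Q x = x := (isOrthProj_mem_range_iff hQ).mp hxQ
    have hPQx : (P₁ * Q) x = P₁ x := by
      show P₁ (Q x) = P₁ x
      rw [hQx]
    have hQP : Q (P₁ x) = P₁ x := by
      have := congrArg (fun T : H →L[ℂ] H => T x) hc1
      simp only [ContinuousLinearMap.mul_apply] at this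
      rw [← this, hQx]
    refine ⟨⟨⟨hPQx ▸ ha, hPQx ▸ ⟨P₁ x, hQP⟩⟩, ⟨hPQx ▸ hb, hPQx ▸ ⟨P₁ x, hQP⟩⟩⟩, hxQ⟩
  · rintro ⟨⟨⟨ha, _⟩, hb, _⟩, hxQ⟩
    have hQx : Q x = x := (isOrthProj_mem_range_iff hQ).mp hxQ
    have hPQx : (P₁ * Q) x = P₁ x := by
      show P₁ (Q x) = P₁ x
      rw [hQx]
    exact ⟨⟨hPQx ▸ ha, hPQx ▸ hb⟩, hxQ⟩
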